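/- Let s ≥ 2 be an integer, and let S and T be disjoint finite sets of rational primes such that every prime in S is greater than s. Then there exists a number field K with [K:ℚ] = s such that every prime p ∈ S splits completely in 𝓞_K (i.e., p𝓞_K is a product of s distinct prime ideals, each with ramification index 1 and residue degree 1) and every prime p ∈ T is inert in 𝓞_K (i.e., p𝓞_K is a prime ideal of 𝓞_K). -/

import Mathlib

open NumberField

open Polynomial Finset in
lemma aux_irred (q s : ℕ) (hq : q.Prime) (hs : s ≠ 0) :
    ∃ g : Polynomial (ZMod q), g.Monic ∧ g.natDegree = s ∧ Irreducible g := by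
  haveI : Fact q.Prime := ⟨hq⟩
  obtain ⟨α, hα⟩ := Field.exists_primitive_element_of_finite_bot (ZMod q) (GaloisField q s)
  have hint : IsIntegral (ZMod q) α := Algebra.IsIntegral.isIntegral α
  refine ⟨minpoly (ZMod q) α, minpoly.monic hint, ?_, minpoly.irreducible hint⟩
  have h1 := IntermediateField.adjoin.finrank hint
  rw [hα] at h1
  rw [← h1, IntermediateField.finrank_top', GaloisField.finrank q hs]

lemma aux_crt (M : Finset ℕ) (hM : ∀ p ∈ M, p.Prime) (v : (p : ℕ) → ZMod p) :
    ∃ c : ℤ, ∀ p ∈ M, (c : ZMod p) = v p := by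
  classical
  induction M using Finset.induction_on with
  | empty => exact ⟨0, by simp⟩
  | @insert q M0 hqM ih =>
    obtain ⟨c, hc⟩ := ih (fun p hp => hM p (Finset.mem_insert_of_mem hp))
    have hqp : q.Prime := hM q (Finset.mem_insert_self q M0)
    haveI : Fact q.Prime := ⟨hqp⟩
    set N : ℕ := ∏ p ∈ M0, p with hN
    have hNq : (N : ZMod q) ≠ 0 := by
      rw [hN]
      push_cast
      rw [Finset.prod_ne_zero_iff]
      intro p hp h0
      have hdvd : q ∣ p := (ZMod.natCast_eq_zero_iff p q).mp h0
      have : q = p :=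
        ((Nat.prime_dvd_prime_iff_eq hqp (hM p (Finset.mem_insert_of_mem hp))).mp hdvd)
      exact hqM (this ▸ hp)
    set u : ZMod q := (v q - (c : ZMod q)) * (N : ZMod q)⁻¹ with hu
    refine ⟨c + (u.val : ℤ) * N, ?_⟩
    intro p hp
    rcases Finset.mem_insert.mp hp with rfl | hp0
    · push_cast
      rw [ZMod.natCast_val, ZMod.cast_id, hu]
      field_simp
      ring
    · have hdvd : (p : ℕ) ∣ N := Finset.dvd_prod_of_mem id hp0
      have : (N : ZMod p) = 0 := (ZMod.natCast_eq_zero_iff N p).mpr hdvd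
      push_cast
      rw [this, mul_zero, add_zero]
      exact hc p hp0

open UniqueFactorizationMonoid in
lemma aux_nf_prod {α : Type*} [CommMonoidWithZero α] [IsCancelMulZero α] [NormalizationMonoid α]
    [UniqueFactorizationMonoid α] (m : Multiset α) (h : ∀ q ∈ m, Prime q) :
    normalizedFactors m.prod = m.map normalize := by
  classical
  induction m using Multiset.induction_on with
  | empty => simp [UniqueFactorizationMonoid.normalizedFactors_one]
  | cons a t ih =>
    have ha : Prime a := h a (Multiset.mem_cons_self a t)
    have ht : ∀ q ∈ t, Prime q := fun q hq => h q (Multiset.mem_cons_of_mem hq)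
    haveI : Nontrivial α := nontrivial_of_ne a 0 ha.ne_zero
    have ht0 : t.prod ≠ 0 := Multiset.prod_ne_zero (fun h0 => (ht 0 h0).ne_zero rfl)
    rw [Multiset.prod_cons, UniqueFactorizationMonoid.normalizedFactors_mul ha.ne_zero ht0,
      normalizedFactors_irreducible ha.irreducible, ih ht, Multiset.map_cons,
      Multiset.singleton_add]

open Polynomial Finset in
lemma aux_poly (s : ℕ) (hs : 2 ≤ s) (S T : Finset ℕ)
    (hSprime : ∀ p ∈ S, p.Prime) (hTprime : ∀ p ∈ T, p.Prime) :
    ∃ f : Polynomial ℤ, f.Monic ∧ f.natDegree = s ∧ Irreducible f ∧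
      (∀ p ∈ S, f.map (Int.castRingHom (ZMod p)) =
        ∏ i ∈ range s, (X - C ((i : ℤ) : ZMod p))) ∧
      (∀ p ∈ T, p ∉ S → Irreducible (f.map (Int.castRingHom (ZMod p)))) := by
  classical
  obtain ⟨q₀, hq₀le, hq₀p⟩ := Nat.exists_infinite_primes ((S ∪ T).sup id + 1)
  have hq₀ : q₀ ∉ S ∪ T := fun h => by
    have : q₀ ≤ (S ∪ T).sup id := Finset.le_sup (f := id) h
    omega
  set M : Finset ℕ := insert q₀ (S ∪ T) with hM
  have hMprime : ∀ p ∈ M, p.Prime := by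
    intro p hp
    rcases Finset.mem_insert.mp hp with rfl | hp
    · exact hq₀p
    · rcases Finset.mem_union.mp hp with h | h
      exacts [hSprime p h, hTprime p h]
  set gP : (p : ℕ) → Polynomial (ZMod p) := fun p =>
    if p ∈ S then ∏ i ∈ range s, (X - C ((i : ℤ) : ZMod p))
    else if hpp : p.Prime then (aux_irred p s hpp (by omega)).choose else 1 with hgP
  have hgS : ∀ p ∈ S, gP p = ∏ i ∈ range s, (X - C ((i : ℤ) : ZMod p)) := by
    intro p hp; simp only [hgP, if_pos hp]
  have hgT : ∀ p : ℕ, (hpp : p.Prime) → p ∉ S →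
      (gP p).Monic ∧ (gP p).natDegree = s ∧ Irreducible (gP p) := by
    intro p hpp hpS
    have : gP p = (aux_irred p s hpp (by omega)).choose := by
      simp only [hgP, if_neg hpS, dif_pos hpp]
    rw [this]
    exact (aux_irred p s hpp (by omega)).choose_spec
  have hgmonic : ∀ p ∈ M, (gP p).Monic ∧ (gP p).natDegree = s := by
    intro p hp
    have hpp := hMprime p hp
    haveI : Fact p.Prime := ⟨hpp⟩
    by_cases hpS : p ∈ S
    · rw [hgS p hpS]
      constructor
      · exact monic_prod_of_monic _ _ (fun i _ => monic_X_sub_C _)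
      · rw [natDegree_prod _ _ (fun i _ => X_sub_C_ne_zero _),
          Finset.sum_congr rfl (fun i _ => natDegree_X_sub_C _), Finset.sum_const,
          card_range, smul_eq_mul, mul_one]
    · obtain ⟨h1, h2, _⟩ := hgT p hpp hpS
      exact ⟨h1, h2⟩
  obtain ⟨c, hc⟩ : ∃ c : ℕ → ℤ, ∀ j, ∀ p ∈ M, ((c j : ℤ) : ZMod p) = (gP p).coeff j := by
    have h := fun j => aux_crt M hMprime (fun p => (gP p).coeff j)
    choose c hc using h
    exact ⟨c, hc⟩
  set f : Polynomial ℤ := X ^ s + ∑ j ∈ range s, C (c j) * X ^ j with hf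
  have hrdeg : (∑ j ∈ range s, C (c j) * X ^ j).degree < (s : WithBot ℕ) := by
    apply lt_of_le_of_lt (degree_sum_le _ _)
    rw [Finset.sup_lt_iff (by exact_mod_cast WithBot.bot_lt_coe s)]
    intro j hj
    exact lt_of_le_of_lt (degree_C_mul_X_pow_le j (c j))
      (by exact_mod_cast mem_range.mp hj)
  have hmonic : f.Monic := monic_X_pow_add hrdeg
  have hdeg : f.natDegree = s := by
    have hdeg' : f.degree = s := by
      rw [hf, degree_add_eq_left_of_degree_lt (by rwa [degree_X_pow]), degree_X_pow]
    exact natDegree_eq_of_degree_eq_some hdeg'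
  have hmap : ∀ p ∈ M, f.map (Int.castRingHom (ZMod p)) = gP p := by
    intro p hp
    haveI : Fact p.Prime := ⟨hMprime p hp⟩
    obtain ⟨hm, hd⟩ := hgmonic p hp
    conv_rhs => rw [hm.as_sum, hd]
    rw [hf, Polynomial.map_add, Polynomial.map_pow, Polynomial.map_X, Polynomial.map_sum]
    congr 1
    refine Finset.sum_congr rfl (fun j _ => ?_)
    rw [Polynomial.map_mul, Polynomial.map_C, Polynomial.map_pow, Polynomial.map_X]
    congr 1
    rw [← hc j p hp]
    norm_cast
  have hq₀M : q₀ ∈ M := Finset.mem_insert_self _ _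
  have hq₀S : q₀ ∉ S := fun h => hq₀ (Finset.mem_union_left _ h)
  have hirr : Irreducible f := by
    haveI : Fact q₀.Prime := ⟨hq₀p⟩
    apply hmonic.irreducible_of_irreducible_map (Int.castRingHom (ZMod q₀))
    rw [hmap q₀ hq₀M]
    exact (hgT q₀ hq₀p hq₀S).2.2
  refine ⟨f, hmonic, hdeg, hirr, ?_, ?_⟩
  · intro p hp
    rw [hmap p (Finset.mem_insert_of_mem (Finset.mem_union_left _ hp)), hgS p hp]
  · intro p hp hpS
    rw [hmap p (Finset.mem_insert_of_mem (Finset.mem_union_right _ hp))]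
    exact (hgT p (hTprime p hp) hpS).2.2

lemma aux_comap_sup {B : Type*} [CommRing B] (C : Ideal B) [Finite (B ⧸ C)]
    (p : ℕ) (hp : p.Prime) (hsup : C ⊔ Ideal.span {(p : B)} = ⊤) :
    (C.comap (algebraMap ℤ B)) ⊔ Ideal.span {(p : ℤ)} = ⊤ := by
  by_contra hne
  have hpprime : Prime (p : ℤ) := Nat.prime_iff_prime_int.mp hp
  have hpm : (Ideal.span {(p : ℤ)}).IsMaximal :=
    PrincipalIdealRing.isMaximal_of_irreducible hpprime.irreducible
  have hle : C.comap (algebraMap ℤ B) ≤ Ideal.span {(p : ℤ)} := by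
    have h2 := hpm.eq_of_le hne le_sup_right
    rw [h2]
    exact le_sup_left
  have h1 : (1 : B) ∈ C ⊔ Ideal.span {(p : B)} := by rw [hsup]; exact Submodule.mem_top
  obtain ⟨cc, hcc, z, hz, hsum⟩ := Submodule.mem_sup.mp h1
  obtain ⟨y, rfl⟩ := Ideal.mem_span_singleton.mp hz
  have hunit : IsUnit ((p : B ⧸ C)) := by
    refine IsUnit.of_mul_eq_one (Ideal.Quotient.mk C y) ?_
    have : Ideal.Quotient.mk C (cc + (p : B) * y) = 1 := by rw [hsum]; rfl
    rw [map_add, Ideal.Quotient.eq_zero_iff_mem.mpr hcc, zero_add, map_mul] at this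
    simpa using this
  haveI : Nonempty (B ⧸ C) := ⟨0⟩
  set n : ℕ := Nat.card (B ⧸ C) with hn
  have hn0 : 0 < n := Nat.card_pos
  have hcast : ((n : ℤ) : B ⧸ C) = 0 := by
    haveI : Fintype (B ⧸ C) := Fintype.ofFinite _
    push_cast
    rw [hn, Nat.card_eq_fintype_card]
    exact Nat.cast_card_eq_zero _
  have key : ∀ k : ℕ, (p : ℤ) ^ k ∣ (n : ℤ) := by
    intro k
    induction k with
    | zero => simp
    | succ k ih =>
      obtain ⟨m, hm⟩ := ih
      have hmz : ((m : ℤ) : B ⧸ C) = 0 := by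
        have : (((p : ℤ) ^ k * m : ℤ) : B ⧸ C) = 0 := by rw [← hm]; exact hcast
        rw [Int.cast_mul, Int.cast_pow] at this
        have hpk : IsUnit (((p : ℤ) : B ⧸ C) ^ k) := by
          apply IsUnit.pow
          simpa using hunit
        exact (hpk.mul_right_eq_zero).mp this
      have hmem : m ∈ C.comap (algebraMap ℤ B) := by
        rw [Ideal.mem_comap]
        apply Ideal.Quotient.eq_zero_iff_mem.mp
        have : (Ideal.Quotient.mk C) (algebraMap ℤ B m) = ((m : ℤ) : B ⧸ C) := by
          simp [algebraMap_int_eq, map_intCast]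
        rw [this, hmz]
      have hpdvd : (p : ℤ) ∣ m := Ideal.mem_span_singleton.mp (hle hmem)
      obtain ⟨m', rfl⟩ := hpdvd
      exact ⟨m', by rw [hm]; ring⟩
  have hdvd : ((p : ℕ) ^ n : ℕ) ∣ n := by
    have := key n
    rwa [← Int.natCast_pow, Int.natCast_dvd_natCast] at this
  have := Nat.le_of_dvd hn0 hdvd
  exact absurd this (not_le.mpr (Nat.lt_pow_self (n := n) hp.one_lt))

open Polynomial UniqueFactorizationMonoid in
lemma aux_inert {K : Type} [Field K] [NumberField K] (x : 𝓞 K) (f : Polynomial ℤ)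
    (hminx : minpoly ℤ x = f) (p : ℕ) (hp : p.Prime)
    (hsup : ((conductor ℤ x).comap (algebraMap ℤ (𝓞 K))) ⊔ Ideal.span {(p : ℤ)} = ⊤)
    (hirr : Irreducible (f.map (Int.castRingHom (ZMod p)))) :
    (Ideal.span {(p : 𝓞 K)}).IsPrime := by
  haveI : Fact p.Prime := ⟨hp⟩
  set I : Ideal ℤ := Ideal.span {(p : ℤ)} with hI
  have hpZ : Prime (p : ℤ) := Nat.prime_iff_prime_int.mp hp
  haveI hImax : I.IsMaximal := PrincipalIdealRing.isMaximal_of_irreducible hpZ.irreducible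
  have hIbot : I ≠ ⊥ := by
    simp only [hI, Ne, Ideal.span_singleton_eq_bot]
    exact_mod_cast hp.ne_zero
  have hxint : IsIntegral ℤ x := IsIntegralClosure.isIntegral ℤ K x
  have hspan : Ideal.span {(p : 𝓞 K)} = I.map (algebraMap ℤ (𝓞 K)) := by
    rw [hI, Ideal.map_span, Set.image_singleton]
    congr 1
    rw [algebraMap_int_eq, eq_intCast, Int.cast_natCast]
  have hmin_irr : Irreducible ((minpoly ℤ x).map (Ideal.Quotient.mk I)) := by
    rw [hminx]
    have hmapI : f.map (Ideal.Quotient.mk I)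
        = (f.map (Int.castRingHom (ZMod p))).map
          (((Int.quotientSpanNatEquivZMod p).symm : ZMod p →+* ℤ ⧸ I)) := by
      rw [Polynomial.map_map]
      exact congrArg (fun φ => f.map φ) (RingHom.ext_int _ _)
    rw [hmapI, ← Polynomial.mapEquiv_apply]
    exact (MulEquiv.irreducible_iff
      (Polynomial.mapEquiv ((Int.quotientSpanNatEquivZMod p).symm))).mpr hirr
  have hKD := KummerDedekind.Ideal.irreducible_map_of_irreducible_minpoly hImax hIbot hsup hxint hmin_irr
  rw [hspan]
  exact Ideal.isPrime_of_prime (UniqueFactorizationMonoid.irreducible_iff_prime.mp hKD)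

open Polynomial UniqueFactorizationMonoid Finset in
lemma aux_split {K : Type} [Field K] [NumberField K] (x : 𝓞 K) (f : Polynomial ℤ) (s : ℕ)
    (hs : 2 ≤ s) (hrank : Module.finrank ℚ K = s)
    (hminx : minpoly ℤ x = f) (p : ℕ) (hp : p.Prime) (hps : s < p)
    (hsup : ((conductor ℤ x).comap (algebraMap ℤ (𝓞 K))) ⊔ Ideal.span {(p : ℤ)} = ⊤)
    (hfac : f.map (Int.castRingHom (ZMod p)) = ∏ i ∈ range s, (X - C ((i : ℤ) : ZMod p))) :
    ∃ F : Finset (Ideal (𝓞 K)), F.card = s ∧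
      (∀ P ∈ F, P.IsPrime ∧ Ideal.absNorm P = p) ∧
      Ideal.span {(p : 𝓞 K)} = ∏ P ∈ F, P := by
  classical
  haveI : Fact p.Prime := ⟨hp⟩
  set I : Ideal ℤ := Ideal.span {(p : ℤ)} with hI
  have hpZ : Prime (p : ℤ) := Nat.prime_iff_prime_int.mp hp
  haveI hImax : I.IsMaximal := PrincipalIdealRing.isMaximal_of_irreducible hpZ.irreducible
  have hIbot : I ≠ ⊥ := by
    simp only [hI, Ne, Ideal.span_singleton_eq_bot]
    exact_mod_cast hp.ne_zero
  have hxint : IsIntegral ℤ x := IsIntegralClosure.isIntegral ℤ K x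
  have hspan : Ideal.span {(p : 𝓞 K)} = I.map (algebraMap ℤ (𝓞 K)) := by
    rw [hI, Ideal.map_span, Set.image_singleton]
    congr 1
    rw [algebraMap_int_eq, eq_intCast, Int.cast_natCast]
  letI : Field (ℤ ⧸ I) := Ideal.Quotient.field I
  set ε : (ℤ ⧸ I) ≃+* ZMod p := Int.quotientSpanNatEquivZMod p with hε
  have hcast : ∀ n : ℤ, (ε.symm : ZMod p →+* ℤ ⧸ I) ((n : ZMod p)) = ((n : ℤ ⧸ I)) := by
    intro n
    have := RingHom.congr_fun (RingHom.ext_int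
      ((ε.symm : ZMod p →+* ℤ ⧸ I).comp (Int.castRingHom (ZMod p)))
      (Int.castRingHom (ℤ ⧸ I))) n
    simpa using this
  set a : ℕ → ℤ ⧸ I := fun i => ((i : ℤ) : ℤ ⧸ I) with ha
  have hainj : ∀ i ∈ range s, ∀ j ∈ range s, a i = a j → i = j := by
    intro i hi j hj hij
    have h1 : (ε (a i)) = (ε (a j)) := congrArg ε hij
    have h2 : ∀ m : ℕ, ε (a m) = ((m : ℤ) : ZMod p) := by
      intro m
      have h4 := congrArg ε (hcast (m : ℤ))
      rw [show ((ε.symm : ZMod p →+* ℤ ⧸ I) (((m : ℤ) : ZMod p)))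
          = ε.symm (((m : ℤ) : ZMod p)) from rfl, RingEquiv.apply_symm_apply] at h4
      exact h4.symm
    rw [h2 i, h2 j] at h1
    have h5 : ((i : ℕ) : ZMod p) = ((j : ℕ) : ZMod p) := by exact_mod_cast h1
    have := congrArg ZMod.val h5
    rwa [ZMod.val_natCast_of_lt (lt_trans (mem_range.mp hi) hps),
      ZMod.val_natCast_of_lt (lt_trans (mem_range.mp hj) hps)] at this
  have hmapI : f.map (Ideal.Quotient.mk I)
      = (f.map (Int.castRingHom (ZMod p))).map ((ε.symm : ZMod p →+* ℤ ⧸ I)) := by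
    rw [Polynomial.map_map]
    exact congrArg (fun φ => f.map φ) (RingHom.ext_int _ _)
  have hmapI2 : f.map (Ideal.Quotient.mk I) = ∏ i ∈ range s, (X - C (a i)) := by
    rw [hmapI, hfac, Polynomial.map_prod]
    refine Finset.prod_congr rfl (fun i _ => ?_)
    rw [Polynomial.map_sub, Polynomial.map_X, Polynomial.map_C, hcast]
  set m : Multiset (Polynomial (ℤ ⧸ I)) :=
    (range s).val.map (fun i => X - C (a i)) with hm
  have hm_nodup : m.Nodup := by
    refine Multiset.Nodup.map_on ?_ (range s).nodup
    intro i hi j hj hij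
    refine hainj i hi j hj ?_
    have := congrArg (fun q => -(Polynomial.coeff q 0)) hij
    simpa using this
  have hm_prime : ∀ q ∈ m, Prime q := by
    intro q hq
    obtain ⟨i, _, rfl⟩ := Multiset.mem_map.mp hq
    exact prime_X_sub_C (a i)
  have hm_card : Multiset.card m = s := by
    rw [hm, Multiset.card_map]
    exact card_range s
  have hnf : normalizedFactors (f.map (Ideal.Quotient.mk I)) = m := by
    rw [hmapI2, Finset.prod_eq_multiset_prod, ← hm, aux_nf_prod m hm_prime]
    rw [show m.map normalize = m.map id from Multiset.map_congr rfl
      (fun q hq => by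
        obtain ⟨i, _, rfl⟩ := Multiset.mem_map.mp hq
        exact (monic_X_sub_C (a i)).normalize_eq_self), Multiset.map_id]
  have hnfmin : normalizedFactors ((minpoly ℤ x).map (Ideal.Quotient.mk I)) = m := by
    rw [hminx]; exact hnf
  have hKD := KummerDedekind.normalizedFactors_ideal_map_eq_normalizedFactors_min_poly_mk_map
    (S := 𝓞 K) (x := x) hImax hIbot hsup hxint
  have hinj : Function.Injective (algebraMap ℤ (𝓞 K)) :=
    FaithfulSMul.algebraMap_injective ℤ (𝓞 K)
  have hmapne : I.map (algebraMap ℤ (𝓞 K)) ≠ 0 := by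
    rw [show (0 : Ideal (𝓞 K)) = ⊥ from rfl, Ne, Ideal.map_eq_bot_iff_of_injective hinj]
    exact hIbot
  have hcard : Multiset.card (normalizedFactors (I.map (algebraMap ℤ (𝓞 K)))) = s := by
    rw [hKD]
    simp only [Multiset.card_map]
    rw [hnfmin]
    simpa using hm_card
  have hnodup : (normalizedFactors (I.map (algebraMap ℤ (𝓞 K)))).Nodup := by
    rw [hKD]
    apply Multiset.Nodup.map
    · intro g1 g2 h
      exact (Equiv.injective _) (Subtype.coe_injective h)
    · rw [Multiset.nodup_attach, hnfmin]
      exact hm_nodup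
  set F : Finset (Ideal (𝓞 K)) := ⟨normalizedFactors (I.map (algebraMap ℤ (𝓞 K))), hnodup⟩
    with hF
  have hFprod : ∏ P ∈ F, P = I.map (algebraMap ℤ (𝓞 K)) := by
    have hass := UniqueFactorizationMonoid.prod_normalizedFactors hmapne
    rw [associated_iff_eq] at hass
    rw [Finset.prod_eq_multiset_prod, hF]
    simpa [Multiset.map_id'] using hass
  have hnorm : Ideal.absNorm (I.map (algebraMap ℤ (𝓞 K))) = p ^ s := by
    rw [← hspan, Ideal.absNorm_span_singleton]
    have h2 : ((Algebra.norm ℤ ((p : 𝓞 K))) : ℚ) = ((p : ℚ)) ^ s := by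
      rw [Algebra.coe_norm_int]
      have h3 : ((p : 𝓞 K) : K) = algebraMap ℚ K (p : ℚ) := by
        simp [map_natCast]
      rw [h3, Algebra.norm_algebraMap, hrank]
    have h4 : Algebra.norm ℤ ((p : 𝓞 K)) = (p : ℤ) ^ s := by exact_mod_cast h2
    rw [h4]
    rw [Int.natAbs_pow]
    simp
  -- norms of each factor
  have hex : ∀ Q : Ideal (𝓞 K), Q ∈ F → ∃ k, 1 ≤ k ∧ Ideal.absNorm Q = p ^ k := by
    intro Q hQ
    have hQmem : Q ∈ normalizedFactors (I.map (algebraMap ℤ (𝓞 K))) := hQ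
    have hQprime : Prime Q := prime_of_normalized_factor Q hQmem
    have hQdvd : Ideal.absNorm Q ∣ p ^ s := by
      rw [← hnorm]
      exact Ideal.absNorm_dvd_absNorm_of_le
        (Ideal.le_of_dvd (dvd_of_mem_normalizedFactors hQmem))
    obtain ⟨k, hk, hQk⟩ := (Nat.dvd_prime_pow hp).mp hQdvd
    refine ⟨k, ?_, hQk⟩
    by_contra hk0
    have : k = 0 := by omega
    rw [this, pow_zero] at hQk
    have : Q = ⊤ := Ideal.absNorm_eq_one_iff.mp hQk
    exact (Ideal.isPrime_of_prime hQprime).ne_top this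
  choose kf hkf1 hkf2 using hex
  have hFcard : F.card = s := hcard
  have hsum : ∑ Q ∈ F.attach, kf Q.1 Q.2 = s := by
    have hpow : p ^ (∑ Q ∈ F.attach, kf Q.1 Q.2) = p ^ s := by
      rw [← Finset.prod_pow_eq_pow_sum]
      have : ∏ Q ∈ F.attach, p ^ kf Q.1 Q.2 = ∏ Q ∈ F.attach, Ideal.absNorm Q.1 := by
        exact Finset.prod_congr rfl (fun Q _ => (hkf2 Q.1 Q.2).symm)
      rw [this, Finset.prod_attach F (fun Q => Ideal.absNorm Q), ← map_prod, hFprod, hnorm]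
    exact Nat.pow_right_injective hp.two_le hpow
  have hall1 : ∀ Q : Ideal (𝓞 K), ∀ hQ : Q ∈ F, kf Q hQ = 1 := by
    intro Q hQ
    by_contra hne
    have h2 : 1 < kf Q hQ := by have := hkf1 Q hQ; omega
    have hlt : ∑ _Q ∈ F.attach, 1 < ∑ Q ∈ F.attach, kf Q.1 Q.2 := by
      refine Finset.sum_lt_sum (fun i _ => hkf1 i.1 i.2) ⟨⟨Q, hQ⟩, Finset.mem_attach _ _, h2⟩
    rw [hsum, Finset.sum_const, smul_eq_mul, mul_one, Finset.card_attach, hFcard] at hlt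
    omega
  refine ⟨F, hFcard, ?_, by rw [hspan, ← hFprod]⟩
  intro P hP
  have hPmem : P ∈ normalizedFactors (I.map (algebraMap ℤ (𝓞 K))) := hP
  refine ⟨Ideal.isPrime_of_prime (prime_of_normalized_factor P hPmem), ?_⟩
  rw [hkf2 P hP, hall1 P hP, pow_one]

open Polynomial Finset

/-- Given an integer `s ≥ 2` and disjoint finite sets `S`, `T` of rational primes with every
prime of `S` greater than `s`, there is a degree-`s` number field `K` in which every prime of
`S` splits completely (its extension is the product of `s` distinct prime ideals, each of
absolute norm `p`, i.e. with ramification index and residue degree `1`) and every prime of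
`T` is inert (its extension is a prime ideal). -/
theorem stmt19 (s : ℕ) (hs : 2 ≤ s) (S T : Finset ℕ)
    (hST : Disjoint S T)
    (hSprime : ∀ p ∈ S, p.Prime) (hTprime : ∀ p ∈ T, p.Prime)
    (hSgt : ∀ p ∈ S, s < p) :
    ∃ (K : Type) (_ : Field K) (_ : NumberField K),
      Module.finrank ℚ K = s ∧
      (∀ p ∈ S, ∃ F : Finset (Ideal (𝓞 K)),
        F.card = s ∧ (∀ P ∈ F, P.IsPrime ∧ Ideal.absNorm P = p) ∧
        Ideal.span {(p : 𝓞 K)} = ∏ P ∈ F, P) ∧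
      (∀ p ∈ T, (Ideal.span {(p : 𝓞 K)}).IsPrime) := by
  classical
  obtain ⟨f, hmonic, hdeg, hirr, hSmap, hTmap⟩ := aux_poly s hs S T hSprime hTprime
  set fQ : Polynomial ℚ := f.map (algebraMap ℤ ℚ) with hfQ
  have hfQmonic : fQ.Monic := hmonic.map _
  have hfQirr : Irreducible fQ := (hmonic.irreducible_iff_irreducible_map_fraction_map).mp hirr
  haveI : Fact (Irreducible fQ) := ⟨hfQirr⟩
  have hfQ0 : fQ ≠ 0 := hfQmonic.ne_zero
  set K : Type := AdjoinRoot fQ with hK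
  letI instK : Field K := AdjoinRoot.instField
  let pb : PowerBasis ℚ K := AdjoinRoot.powerBasis hfQ0
  haveI : FiniteDimensional ℚ K := pb.finite
  haveI : CharZero K := charZero_of_injective_algebraMap (algebraMap ℚ K).injective
  haveI instNF : NumberField K := ⟨⟩
  have hinjQ : Function.Injective (algebraMap ℤ ℚ) := fun a b h => by exact_mod_cast h
  have hrank : Module.finrank ℚ K = s := by
    rw [pb.finrank, AdjoinRoot.powerBasis_dim, hfQ, hmonic.natDegree_map, hdeg]
  set θ : K := AdjoinRoot.root fQ with hθ
  have haevalθQ : (Polynomial.aeval θ) fQ = 0 := by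
    have h := AdjoinRoot.mk_self (f := fQ)
    rw [← AdjoinRoot.aeval_eq] at h
    exact h
  have haevalθ : (Polynomial.aeval θ) f = 0 := by
    rw [← Polynomial.aeval_map_algebraMap ℚ θ f]
    exact haevalθQ
  have hθint : IsIntegral ℤ θ := ⟨f, hmonic, haevalθ⟩
  set x : 𝓞 K := IsIntegralClosure.mk' (𝓞 K) θ hθint with hx
  have hxmap : algebraMap (𝓞 K) K x = θ := IsIntegralClosure.algebraMap_mk' _ _ _
  have hminθQ : minpoly ℚ θ = fQ :=
    (minpoly.eq_of_irreducible_of_monic hfQirr haevalθQ hfQmonic).symm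
  have hminθ : minpoly ℤ θ = f := by
    have h2 : minpoly ℚ θ = (minpoly ℤ θ).map (algebraMap ℤ ℚ) :=
      minpoly.isIntegrallyClosed_eq_field_fractions' ℚ hθint
    have h3 : (minpoly ℤ θ).map (algebraMap ℤ ℚ) = f.map (algebraMap ℤ ℚ) := by
      rw [← h2, hminθQ, hfQ]
    exact Polynomial.map_injective _ hinjQ h3
  have hxint : IsIntegral ℤ x := IsIntegralClosure.isIntegral ℤ K x
  have hminx : minpoly ℤ x = f := by
    rw [← minpoly.algebraMap_eq (IsIntegralClosure.algebraMap_injective (𝓞 K) ℤ K) x,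
      hxmap, hminθ]
  -- conductor facts
  set Cd : Ideal (𝓞 K) := conductor ℤ x with hCd
  have hadj : Algebra.adjoin ℚ {algebraMap (𝓞 K) K x} = ⊤ := by
    rw [hxmap, hθ, ← AdjoinRoot.powerBasis_gen hfQ0]
    exact pb.adjoin_gen_eq_top
  have hcondmul := conductor_mul_differentIdeal ℤ ℚ K x hadj
  rw [hminx] at hcondmul
  have hf'mem : (Polynomial.aeval x) (derivative f) ∈ Cd := by
    rw [← Ideal.span_singleton_le_iff_mem, ← hcondmul]
    exact Ideal.mul_le_left
  have hf'ne : (Polynomial.aeval x) (derivative f) ≠ 0 := by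
    intro h0
    have hθ0 : (Polynomial.aeval θ) (derivative f) = 0 := by
      rw [← hxmap, Polynomial.aeval_algebraMap_apply, h0, map_zero]
    have hd0 : (derivative f).map (algebraMap ℤ ℚ) ≠ 0 := by
      have hcoeff : (derivative f).coeff (s - 1) = (s : ℤ) := by
        rw [Polynomial.coeff_derivative]
        have hs1 : s - 1 + 1 = s := by omega
        rw [hs1]
        have hc1 : f.coeff s = 1 := by rw [← hdeg]; exact hmonic.coeff_natDegree
        rw [hc1]
        push_cast [Nat.cast_sub (by omega : 1 ≤ s)]
        ring
      intro hmap0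
      have hder0 : derivative f = 0 :=
        Polynomial.map_injective _ hinjQ (by rw [hmap0, Polynomial.map_zero])
      rw [hder0] at hcoeff
      simp only [Polynomial.coeff_zero] at hcoeff
      have : (s : ℤ) ≠ 0 := by exact_mod_cast (by omega : s ≠ 0)
      exact this hcoeff.symm
    have hQ0 : (Polynomial.aeval θ) ((derivative f).map (algebraMap ℤ ℚ)) = 0 := by
      rw [Polynomial.aeval_map_algebraMap]
      exact hθ0
    have hle := minpoly.degree_le_of_ne_zero ℚ θ hd0 hQ0
    rw [hminθQ] at hle
    have h2 : ((derivative f).map (algebraMap ℤ ℚ)).degree < fQ.degree := by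
      rw [hfQ, Polynomial.degree_map_eq_of_injective hinjQ,
        Polynomial.degree_map_eq_of_injective hinjQ]
      exact Polynomial.degree_derivative_lt hmonic.ne_zero
    exact absurd hle (not_le.mpr h2)
  have hCdne : Cd ≠ ⊥ := by
    intro h
    rw [h] at hf'mem
    exact hf'ne (Ideal.mem_bot.mp hf'mem)
  haveI : Finite ((𝓞 K) ⧸ Cd) := by
    haveI := Ideal.finiteQuotientOfFreeOfNeBot Cd hCdne
    exact this
  have hsup : ∀ p : ℕ, p.Prime → (f.map (Int.castRingHom (ZMod p))).Separable →
      (Cd.comap (algebraMap ℤ (𝓞 K))) ⊔ Ideal.span {(p : ℤ)} = ⊤ := by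
    intro p hp hsep
    haveI : Fact p.Prime := ⟨hp⟩
    apply aux_comap_sup Cd p hp
    obtain ⟨u, v, huv⟩ := hsep
    have hcastco : ⇑(Int.castRingHom (ZMod p)) = (Int.cast : ℤ → ZMod p) := rfl
    obtain ⟨U, hU⟩ := Polynomial.map_surjective (Int.castRingHom (ZMod p))
      (hcastco ▸ ZMod.intCast_surjective) u
    obtain ⟨V, hV⟩ := Polynomial.map_surjective (Int.castRingHom (ZMod p))
      (hcastco ▸ ZMod.intCast_surjective) v
    set D : Polynomial ℤ := U * f + V * derivative f - 1 with hD
    have hDmap : D.map (Int.castRingHom (ZMod p)) = 0 := by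
      rw [hD, Polynomial.map_sub, Polynomial.map_add, Polynomial.map_mul, Polynomial.map_mul,
        Polynomial.map_one, hU, hV, ← Polynomial.derivative_map, huv, sub_self]
    have hdvd : C (p : ℤ) ∣ D := by
      rw [Polynomial.C_dvd_iff_dvd_coeff]
      intro i
      have h2 : ((D.coeff i : ℤ) : ZMod p) = 0 := by
        have := congrArg (fun q => Polynomial.coeff q i) hDmap
        simpa [Polynomial.coeff_map] using this
      exact_mod_cast (ZMod.intCast_zmod_eq_zero_iff_dvd _ p).mp h2
    obtain ⟨E, hE⟩ := hdvd
    have haevalf : (Polynomial.aeval x) f = 0 := by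
      rw [← hminx]
      exact minpoly.aeval ℤ x
    have heval : (Polynomial.aeval x) V * (Polynomial.aeval x) (derivative f) - 1
        = (p : 𝓞 K) * (Polynomial.aeval x) E := by
      have h3 := congrArg (Polynomial.aeval x) hE
      rw [hD] at h3
      simp only [map_sub, map_add, map_mul, map_one, haevalf, mul_zero, zero_add,
        Polynomial.aeval_C] at h3
      rw [h3]
      norm_num
    rw [Ideal.eq_top_iff_one]
    have h1 : (1 : 𝓞 K) = (Polynomial.aeval x) V * (Polynomial.aeval x) (derivative f)
        - (p : 𝓞 K) * (Polynomial.aeval x) E := by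
      linear_combination -heval
    rw [h1]
    refine Submodule.sub_mem _ ?_ ?_
    · exact Ideal.mem_sup_left (Ideal.mul_mem_left _ _ hf'mem)
    · exact Ideal.mem_sup_right
        (Ideal.mul_mem_right _ _ (Ideal.mem_span_singleton_self _))
  refine ⟨K, instK, instNF, hrank, ?_, ?_⟩
  · intro p hp
    have hpp := hSprime p hp
    haveI : Fact p.Prime := ⟨hpp⟩
    have hsep : (f.map (Int.castRingHom (ZMod p))).Separable := by
      rw [hSmap p hp]
      apply Polynomial.separable_prod'
      · intro i hi j hj hij
        apply Polynomial.isCoprime_X_sub_C_of_isUnit_sub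
        have hne : ((i : ℤ) : ZMod p) ≠ ((j : ℤ) : ZMod p) := by
          intro h
          apply hij
          have h' : ((i : ℕ) : ZMod p) = ((j : ℕ) : ZMod p) := by exact_mod_cast h
          have h2 := congrArg ZMod.val h'
          rwa [ZMod.val_natCast_of_lt (lt_trans (mem_range.mp hi) (hSgt p hp)),
            ZMod.val_natCast_of_lt (lt_trans (mem_range.mp hj) (hSgt p hp))] at h2
        exact isUnit_iff_ne_zero.mpr (sub_ne_zero.mpr hne)
      · exact fun i _ => Polynomial.separable_X_sub_C
    exact aux_split x f s hs hrank hminx p hpp (hSgt p hp) (hsup p hpp hsep) (hSmap p hp)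
  · intro p hp
    have hpp := hTprime p hp
    haveI : Fact p.Prime := ⟨hpp⟩
    have hpS : p ∉ S := fun h => (Finset.disjoint_left.mp hST h) hp
    have hirrp := hTmap p hp hpS
    have hsep : (f.map (Int.castRingHom (ZMod p))).Separable :=
      PerfectField.separable_of_irreducible hirrp
    exact aux_inert x f hminx p hpp (hsup p hpp hsep) hirrp
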